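/- arXiv:2309.10092 — 2 statements merged into one kernel-verified Lean document; each statement's English description precedes it below -/
import Mathlib

section
/- Let X_1, …, X_{M+1} be i.i.d. real-valued random variables whose common distribution is atomless, let α ∈ (0,1), and set k = ⌈(M+1)(1−α)⌉; assume k ≤ M. Let q be the k-th smallest value among X_1, …, X_M. Then P(X_{M+1} ≤ q) ≥ 1 − α. -/
open MeasureTheory ProbabilityTheory
open scoped ENNReal NNReal

/-- The `k`-th smallest value (1-indexed) among `r 0, …, r (M-1)`: the `k`-th
element of the nondecreasing rearrangement of the values. -/
noncomputable def kthSmallest {M : ℕ} (r : Fin M → ℝ) (k : ℕ) : ℝ :=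
  ((List.ofFn r).mergeSort (fun a b => a ≤ b)).getD (k - 1) 0

section ListLemmas

lemma sorted_getD_lt_iff {l : List ℝ} (hs : l.Pairwise (· ≤ ·)) {j : ℕ} (hj : j < l.length)
    (x : ℝ) : l.getD j 0 < x ↔ j < l.countP (fun a => decide (a < x)) := by
  rw [List.getD_eq_getElem l 0 hj]
  constructor
  · intro h
    have hsplit := List.countP_append (p := fun a => decide (a < x)) (l₁ := l.take (j+1)) (l₂ := l.drop (j+1))
    rw [List.take_append_drop] at hsplit
    have htake : (l.take (j+1)).countP (fun a => decide (a < x)) = (l.take (j+1)).length := by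
      rw [List.countP_eq_length]
      intro a ha
      rw [List.mem_take_iff_getElem] at ha
      obtain ⟨i, hi, rfl⟩ := ha
      have hi' : i < l.length := lt_of_lt_of_le hi (min_le_right _ _)
      have hij : i ≤ j := Nat.lt_succ_iff.mp (lt_of_lt_of_le hi (min_le_left _ _))
      have : l[i] ≤ l[j] := hs.rel_get_of_le (a := ⟨i, hi'⟩) (b := ⟨j, hj⟩) hij
      simpa using lt_of_le_of_lt this h
    rw [List.length_take, min_eq_left (Nat.succ_le_of_lt hj)] at htake
    omega
  · intro h
    by_contra hx
    push_neg at hx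
    have hsplit := List.countP_append (p := fun a => decide (a < x)) (l₁ := l.take j) (l₂ := l.drop j)
    rw [List.take_append_drop] at hsplit
    have hdrop : (l.drop j).countP (fun a => decide (a < x)) = 0 := by
      rw [List.countP_eq_zero]
      intro a ha
      rw [List.mem_iff_getElem] at ha
      obtain ⟨i, hi, rfl⟩ := ha
      rw [List.getElem_drop] at *
      have hji : j ≤ j + i := Nat.le_add_right _ _
      have hlen : j + i < l.length := by
        have : (l.drop j).length = l.length - j := List.length_drop; omega
      have : l[j] ≤ l[j+i] := hs.rel_get_of_le (a := ⟨j, hj⟩) (b := ⟨j+i, hlen⟩) hji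
      simp only [decide_eq_true_eq, not_lt]
      exact le_trans hx this
    have htake := List.countP_le_length (p := fun a => decide (a < x)) (l := l.take j)
    rw [List.length_take] at htake
    omega

lemma le_kthSmallest_iff {M : ℕ} (r : Fin M → ℝ) {k : ℕ} (hk1 : 1 ≤ k) (hkM : k ≤ M)
    (x : ℝ) :
    x ≤ kthSmallest r k ↔ (Finset.univ.filter (fun i => r i < x)).card < k := by
  set l := (List.ofFn r).mergeSort (fun a b => a ≤ b) with hl
  have hperm : List.Perm l (List.ofFn r) := List.mergeSort_perm _ _
  have hlen : l.length = M := by rw [hperm.length_eq, List.length_ofFn]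
  have hsorted : l.Pairwise (· ≤ ·) := by
    have := List.pairwise_mergeSort (le := fun a b : ℝ => decide (a ≤ b))
      (fun a b c hab hbc => by simp at *; linarith)
      (fun a b => by simp [le_total]) (List.ofFn r)
    simpa [hl] using this
  have hj : k - 1 < l.length := by omega
  have key := sorted_getD_lt_iff hsorted hj x
  have hcount : l.countP (fun a => decide (a < x)) =
      (Finset.univ.filter (fun i => r i < x)).card := by
    rw [hperm.countP_eq, List.ofFn_eq_map, List.countP_map, List.countP_eq_length_filter]
    rfl
  rw [hcount] at key
  unfold kthSmallest
  rw [← hl]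
  constructor
  · intro h
    by_contra hc
    push_neg at hc
    have := key.mpr (by omega)
    linarith
  · intro h
    by_contra hc
    push_neg at hc
    have := key.mp hc
    omega

end ListLemmas

section CountingLemmas

lemma rank_count {n : ℕ} (f : Fin n → ℝ) (hf : Function.Injective f) (k : ℕ) (hk : k ≤ n) :
    (Finset.univ.filter (fun j : Fin n =>
      (Finset.univ.filter (fun i => f i < f j)).card < k)).card = k := by
  set N : Fin n → ℕ := fun j => (Finset.univ.filter (fun i => f i < f j)).card with hN
  have hNinj : Function.Injective N := by
    intro j1 j2 h
    by_contra hne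
    have hfne : f j1 ≠ f j2 := fun h' => hne (hf h')
    rcases lt_or_gt_of_ne hfne with hlt | hlt
    all_goals {
      have hss : Finset.univ.filter (fun i => f i < f j1) ⊂ Finset.univ.filter (fun i => f i < f j2) ∨
          Finset.univ.filter (fun i => f i < f j2) ⊂ Finset.univ.filter (fun i => f i < f j1) := by
        first
        | exact Or.inl (Finset.ssubset_iff_of_subset (fun i hi => by
            simp only [Finset.mem_filter, Finset.mem_univ, true_and] at *
            exact lt_trans hi hlt) |>.mpr ⟨j1, by simp [hlt], by simp⟩)
        | exact Or.inr (Finset.ssubset_iff_of_subset (fun i hi => by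
            simp only [Finset.mem_filter, Finset.mem_univ, true_and] at *
            exact lt_trans hi hlt) |>.mpr ⟨j2, by simp [hlt], by simp⟩)
      rcases hss with hss | hss
      · exact absurd h (Nat.ne_of_lt (Finset.card_lt_card hss))
      · exact absurd h.symm (Nat.ne_of_lt (Finset.card_lt_card hss)) }
  have hNlt : ∀ j, N j < n := by
    intro j
    have : Finset.univ.filter (fun i => f i < f j) ⊂ Finset.univ := by
      rw [Finset.ssubset_univ_iff]
      intro hE
      have hj : j ∈ Finset.univ.filter (fun i => f i < f j) := by
        rw [hE]; exact Finset.mem_univ j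
      simp at hj
    simpa [N, Fintype.card_fin] using Finset.card_lt_card this
  have himg : Finset.univ.image N = Finset.range n := by
    apply Finset.eq_of_subset_of_card_le
    · intro m hm
      simp only [Finset.mem_image] at hm
      obtain ⟨j, _, rfl⟩ := hm
      exact Finset.mem_range.mpr (hNlt j)
    · rw [Finset.card_range, Finset.card_image_of_injective _ hNinj]
      simp
  have : (Finset.univ.filter (fun j => N j < k)).card
      = ((Finset.univ.image N).filter (fun m => m < k)).card := by
    rw [Finset.filter_image]
    exact (Finset.card_image_of_injective _ hNinj).symm
  rw [this, himg]
  have : Finset.filter (fun m => m < k) (Finset.range n) = Finset.range k := by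
    ext m
    simp only [Finset.mem_filter, Finset.mem_range]
    omega
  rw [this, Finset.card_range]

/-- number of indices `i ≠ j` with `f i < f j` -/
noncomputable def Nfun {n : ℕ} (j : Fin n) (f : Fin n → ℝ) : ℕ :=
  (Finset.univ.filter (fun i => i ≠ j ∧ f i < f j)).card

lemma Nfun_measurable {n : ℕ} (j : Fin n) : Measurable (Nfun j) := by
  have : Nfun j = fun f => ∑ i : Fin n, if i ≠ j ∧ f i < f j then 1 else 0 := by
    funext f; exact Finset.card_filter _ _
  rw [this]
  refine Finset.measurable_sum _ fun i _ => ?_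
  refine Measurable.ite ?_ measurable_const measurable_const
  exact (MeasurableSet.const _).inter
    (measurableSet_lt (measurable_pi_apply i) (measurable_pi_apply j))

lemma measurableSet_Nfun_lt {n : ℕ} (j : Fin n) (k : ℕ) :
    MeasurableSet {f : Fin n → ℝ | Nfun j f < k} :=
  Nfun_measurable j (by trivial : MeasurableSet {m : ℕ | m < k})

lemma Nfun_comp_swap {n : ℕ} (j j' : Fin n) (e : Equiv.Perm (Fin n)) (he : e j' = j)
    (f : Fin n → ℝ) : Nfun j' (f ∘ e) = Nfun j f := by
  unfold Nfun
  refine Finset.card_bij (fun i _ => e i) ?_ ?_ ?_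
  · intro i hi
    simp only [Finset.mem_filter, Finset.mem_univ, true_and, Function.comp_apply] at hi ⊢
    rw [← he]
    exact ⟨fun h => hi.1 (e.injective h), he ▸ hi.2⟩
  · intro a _ b _ hab
    exact e.injective hab
  · intro i' hi'
    simp only [Finset.mem_filter, Finset.mem_univ, true_and, Function.comp_apply] at hi' ⊢
    refine ⟨e.symm i', ⟨?_, ?_⟩, by simp⟩
    · intro h
      apply hi'.1
      rw [← he, ← h]
      simp
    · simpa [he] using hi'.2

lemma Nfun_eq_of_injective {n : ℕ} (j : Fin n) (f : Fin n → ℝ) (hf : Function.Injective f) :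
    Nfun j f = (Finset.univ.filter (fun i => f i < f j)).card := by
  unfold Nfun
  congr 1
  apply Finset.filter_congr
  intro i _
  simp only [ne_eq, and_iff_right_iff_imp]
  intro hlt hij
  rw [hij] at hlt
  exact lt_irrefl _ hlt

lemma card_castSucc {M : ℕ} (f : Fin (M+1) → ℝ) :
    (Finset.univ.filter (fun i : Fin M => f i.castSucc < f (Fin.last M))).card
      = Nfun (Fin.last M) f := by
  unfold Nfun
  refine Finset.card_bij (fun i _ => i.castSucc) ?_ ?_ ?_
  · intro i hi
    simp only [Finset.mem_filter, Finset.mem_univ, true_and] at hi ⊢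
    exact ⟨Fin.ne_of_lt (Fin.castSucc_lt_last i), hi⟩
  · intro a _ b _ hab
    exact Fin.castSucc_injective _ hab
  · intro j hj
    simp only [Finset.mem_filter, Finset.mem_univ, true_and] at hj
    obtain ⟨i, rfl⟩ := Fin.exists_castSucc_eq.mpr hj.1
    exact ⟨i, by simp [hj.2], rfl⟩

end CountingLemmas

section ProbLemmas

variable {Ω : Type*} [MeasurableSpace Ω] (P : Measure Ω) [IsProbabilityMeasure P]

omit [IsProbabilityMeasure P] in
lemma joint_law (n : ℕ) (X : Fin n → Ω → ℝ) (hmeas : ∀ i, Measurable (X i))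
    (μ : Measure ℝ) [IsProbabilityMeasure μ]
    (hident : ∀ i, Measure.map (X i) P = μ)
    (hindep : iIndepFun X P) :
    Measure.map (fun ω (i : Fin n) => X i ω) P = Measure.pi (fun _ => μ) := by
  have hT : Measurable (fun ω (i : Fin n) => X i ω) :=
    measurable_pi_lambda _ (fun i => hmeas i)
  refine (Measure.pi_eq (ι := Fin n) (α := fun _ => ℝ) (μ := fun _ => μ)
    fun s hs => ?_).symm
  rw [Measure.map_apply hT (MeasurableSet.univ_pi hs)]
  have hpre : (fun ω (i : Fin n) => X i ω) ⁻¹' (Set.univ.pi s)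
      = ⋂ i ∈ Finset.univ, X i ⁻¹' s i := by
    ext ω; simp [Set.mem_pi]
  rw [hpre, hindep.measure_inter_preimage_eq_mul Finset.univ (fun i _ => hs i)]
  refine Finset.prod_congr rfl fun i _ => ?_
  rw [← hident i, Measure.map_apply (hmeas i) (hs i)]

lemma no_ties (n : ℕ) (X : Fin n → Ω → ℝ) (hmeas : ∀ i, Measurable (X i))
    (μ : Measure ℝ) [IsProbabilityMeasure μ]
    (hident : ∀ i, Measure.map (X i) P = μ)
    (hatomless : ∀ x : ℝ, μ {x} = 0)
    (hindep : iIndepFun X P)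
    {i j : Fin n} (hij : i ≠ j) :
    P {ω | X i ω = X j ω} = 0 := by
  have hind := hindep.indepFun hij
  rw [indepFun_iff_map_prod_eq_prod_map_map (hmeas i).aemeasurable
    (hmeas j).aemeasurable] at hind
  rw [hident i, hident j] at hind
  have hD : MeasurableSet {p : ℝ × ℝ | p.1 = p.2} :=
    measurableSet_eq_fun measurable_fst measurable_snd
  have hpair : Measurable (fun ω => (X i ω, X j ω)) := (hmeas i).prodMk (hmeas j)
  have hset : {ω | X i ω = X j ω}
      = (fun ω => (X i ω, X j ω)) ⁻¹' {p : ℝ × ℝ | p.1 = p.2} := rfl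
  rw [hset, ← Measure.map_apply hpair hD, hind, Measure.prod_apply hD]
  have hfib : ∀ x : ℝ, Prod.mk x ⁻¹' {p : ℝ × ℝ | p.1 = p.2} = {x} := by
    intro x; ext y; simp [eq_comm]
  simp only [hfib, hatomless]
  simp

end ProbLemmas

lemma swap_law (n : ℕ) (μ : Measure ℝ) [IsProbabilityMeasure μ] (e : Equiv.Perm (Fin n)) :
    Measure.map (fun g : Fin n → ℝ => g ∘ e) (Measure.pi (fun _ => μ))
      = Measure.pi (fun _ => μ) := by
  have h := measurePreserving_piCongrLeft (fun _ : Fin n => μ) e.symm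
  have hco : ⇑(MeasurableEquiv.piCongrLeft (fun _ : Fin n => ℝ) e.symm)
      = fun g : Fin n → ℝ => g ∘ e := by
    funext g
    simp [MeasurableEquiv.piCongrLeft, Equiv.piCongrLeft, Equiv.piCongrLeft',
      Function.comp]
    rfl
  rw [hco] at h
  exact h.map_eq

/-- Split conformal prediction coverage guarantee: if `X 0, …, X M` are i.i.d.
with atomless common distribution, `α ∈ (0,1)`, `k = ⌈(M+1)(1-α)⌉ ≤ M`, and `q`
is the `k`-th smallest of the first `M` variables, then
`P(X (last) ≤ q) ≥ 1 - α`. -/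
theorem conformal_coverage
    {Ω : Type*} [MeasurableSpace Ω] (P : Measure Ω) [IsProbabilityMeasure P]
    (M : ℕ) (X : Fin (M + 1) → Ω → ℝ)
    (hmeas : ∀ i, Measurable (X i))
    (μ : Measure ℝ)
    (hident : ∀ i, Measure.map (X i) P = μ)
    (hatomless : ∀ x : ℝ, μ {x} = 0)
    (hindep : iIndepFun X P)
    (α : ℝ) (hα : α ∈ Set.Ioo (0 : ℝ) 1)
    (k : ℕ) (hk : k = ⌈((M : ℝ) + 1) * (1 - α)⌉₊) (hkM : k ≤ M) :
    ENNReal.ofReal (1 - α) ≤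
      P {ω | X (Fin.last M) ω ≤
        kthSmallest (fun i : Fin M => X i.castSucc ω) k} := by
  obtain ⟨hα0, hα1⟩ := hα
  haveI hμP : IsProbabilityMeasure μ := by
    rw [← hident 0]
    exact Measure.isProbabilityMeasure_map (hmeas 0).aemeasurable
  set ν : Measure (Fin (M+1) → ℝ) := Measure.pi (fun _ => μ) with hν
  haveI : IsProbabilityMeasure ν := by rw [hν]; infer_instance
  set T : Ω → (Fin (M+1) → ℝ) := fun ω i => X i ω with hTdef
  have hT : Measurable T := measurable_pi_lambda _ (fun i => hmeas i)
  have hmap : Measure.map T P = ν := joint_law P (M+1) X hmeas μ hident hindep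
  have hk1 : 1 ≤ k := by
    rw [hk]
    rw [Nat.one_le_iff_ne_zero, ← Nat.pos_iff_ne_zero, Nat.ceil_pos]
    have h1α : (0:ℝ) < 1 - α := by linarith
    positivity
  -- identify the event
  set A : Set (Fin (M+1) → ℝ) := {f | Nfun (Fin.last M) f < k} with hA
  have hAmeas : MeasurableSet A := measurableSet_Nfun_lt _ _
  have hevent : {ω | X (Fin.last M) ω ≤
      kthSmallest (fun i : Fin M => X i.castSucc ω) k} = T ⁻¹' A := by
    ext ω
    simp only [Set.mem_setOf_eq, Set.mem_preimage, hA]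
    rw [le_kthSmallest_iff _ hk1 hkM, card_castSucc (T ω)]
  rw [hevent, ← Measure.map_apply hT hAmeas, hmap]
  -- a.e. injectivity
  have hae : ∀ᵐ f ∂ν, Function.Injective f := by
    rw [ae_iff]
    have hU : ν (⋃ i, ⋃ j, {f : Fin (M+1) → ℝ | i ≠ j ∧ f i = f j}) = 0 := by
      refine measure_iUnion_null fun i => measure_iUnion_null fun j => ?_
      rcases eq_or_ne i j with rfl | hij
      · simp
      · have hset : {f : Fin (M+1) → ℝ | i ≠ j ∧ f i = f j}
            = {f : Fin (M+1) → ℝ | f i = f j} := by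
          ext f; simp [hij]
        rw [hset]
        have hms : MeasurableSet {f : Fin (M+1) → ℝ | f i = f j} :=
          measurableSet_eq_fun (measurable_pi_apply i) (measurable_pi_apply j)
        rw [← hmap, Measure.map_apply hT hms]
        exact no_ties P (M+1) X hmeas μ hident hatomless hindep hij
    refine measure_mono_null ?_ hU
    intro f hf
    simp only [Set.mem_setOf_eq, Function.Injective, not_forall] at hf
    obtain ⟨a, b, hab, hne⟩ := hf
    simp only [Set.mem_iUnion, Set.mem_setOf_eq]
    exact ⟨a, b, hne, hab⟩
  -- exchangeability
  have hexch : ∀ j : Fin (M+1), ν {f | Nfun j f < k} = ν A := by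
    intro j
    set e := Equiv.swap j (Fin.last M) with hedef
    have he : e (Fin.last M) = j := Equiv.swap_apply_right _ _
    have hS : Measurable (fun g : Fin (M+1) → ℝ => g ∘ e) :=
      measurable_pi_lambda _ fun i => measurable_pi_apply _
    have hpre : (fun g : Fin (M+1) → ℝ => g ∘ e) ⁻¹' A = {f | Nfun j f < k} := by
      ext g
      simp only [Set.mem_preimage, Set.mem_setOf_eq, hA]
      rw [Nfun_comp_swap j (Fin.last M) e he]
    calc ν {f | Nfun j f < k}
        = ν ((fun g : Fin (M+1) → ℝ => g ∘ e) ⁻¹' A) := by rw [hpre]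
      _ = (Measure.map (fun g : Fin (M+1) → ℝ => g ∘ e) ν) A :=
          (Measure.map_apply hS hAmeas).symm
      _ = ν A := by rw [hν, swap_law]
  -- sum identity
  have hsum : ∑ j : Fin (M+1), ν {f | Nfun j f < k} = (k : ℝ≥0∞) := by
    have hterm : ∀ j : Fin (M+1), ν {f | Nfun j f < k}
        = ∫⁻ f, Set.indicator {f | Nfun j f < k} (fun _ => (1:ℝ≥0∞)) f ∂ν := by
      intro j
      rw [lintegral_indicator (measurableSet_Nfun_lt _ _)]
      simp
    simp_rw [hterm]
    have hfs := lintegral_finset_sum (μ := ν) Finset.univ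
      (f := fun (j : Fin (M+1)) (f : Fin (M+1) → ℝ) =>
        Set.indicator {f | Nfun j f < k} (fun _ => (1:ℝ≥0∞)) f)
      (fun j _ => measurable_one.indicator (measurableSet_Nfun_lt _ _))
    rw [← hfs]
    have hpt : ∫⁻ f, ∑ j : Fin (M+1),
        Set.indicator {f | Nfun j f < k} (fun _ => (1:ℝ≥0∞)) f ∂ν
        = ∫⁻ _, (k : ℝ≥0∞) ∂ν := by
      refine lintegral_congr_ae (hae.mono fun f hf => ?_)
      have h1 : ∀ j : Fin (M+1),
          Set.indicator {f | Nfun j f < k} (fun _ => (1:ℝ≥0∞)) f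
          = if Nfun j f < k then (1:ℝ≥0∞) else 0 := by
        intro j; rw [Set.indicator_apply]; rfl
      simp_rw [h1]
      have h2 : ∑ j : Fin (M+1), (if Nfun j f < k then (1:ℝ≥0∞) else 0)
          = ((Finset.univ.filter (fun j => Nfun j f < k)).card : ℝ≥0∞) := by
        rw [Finset.card_filter]
        push_cast
        exact Finset.sum_congr rfl fun j _ => by split <;> simp
      rw [h2]
      have h3 : Finset.univ.filter (fun j => Nfun j f < k)
          = Finset.univ.filter (fun j : Fin (M+1) =>
              (Finset.univ.filter (fun i => f i < f j)).card < k) := by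
        apply Finset.filter_congr
        intro j _
        rw [Nfun_eq_of_injective j f hf]
      rw [h3, rank_count f hf k (by omega)]
    rw [hpt, lintegral_const, measure_univ, mul_one]
  have htot : ((M:ℝ≥0∞) + 1) * ν A = (k : ℝ≥0∞) := by
    rw [← hsum]
    simp_rw [hexch]
    rw [Finset.sum_const, Finset.card_univ, Fintype.card_fin, nsmul_eq_mul]
    push_cast
    ring
  -- final arithmetic
  have hne0 : ((M:ℝ≥0∞) + 1) ≠ 0 := by simp
  have hnetop : ((M:ℝ≥0∞) + 1) ≠ ⊤ := by
    simp [ENNReal.add_ne_top, ENNReal.natCast_ne_top]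
  rw [← ENNReal.mul_le_mul_iff_right hne0 hnetop, htot]
  have hcast : ((M:ℝ≥0∞) + 1) * ENNReal.ofReal (1 - α)
      = ENNReal.ofReal (((M:ℝ) + 1) * (1 - α)) := by
    rw [ENNReal.ofReal_mul (by positivity)]
    congr 1
    rw [← ENNReal.ofReal_natCast M, ← ENNReal.ofReal_one, ← ENNReal.ofReal_add
      (by positivity) (by norm_num)]
  rw [hcast]
  have : ((M:ℝ) + 1) * (1 - α) ≤ (k : ℝ) := by
    rw [hk]
    exact Nat.le_ceil _
  calc ENNReal.ofReal (((M:ℝ) + 1) * (1 - α)) ≤ ENNReal.ofReal (k : ℝ) :=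
        ENNReal.ofReal_le_ofReal this
    _ = (k : ℝ≥0∞) := ENNReal.ofReal_natCast k
end

section
/- Let X_1, …, X_{M+1} be i.i.d. real-valued random variables whose common distribution is atomless, let α ∈ (0,1), and set k = ⌈(M+1)(1−α)⌉; assume k ≤ M. Let q be the k-th smallest value among X_1, …, X_M. Then P(X_{M+1} < q) ≥ 1 − α. -/
open MeasureTheory ProbabilityTheory
open scoped ENNReal

theorem sorted_le_iff_countP {l : List ℝ} (hs : l.Pairwise (· ≤ ·)) {k : ℕ}
    (hk1 : 1 ≤ k) (hkl : k ≤ l.length) (y : ℝ) :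
    l.getD (k-1) 0 ≤ y ↔ k ≤ l.countP (fun a => a ≤ y) := by
  have hlt : k - 1 < l.length := by omega
  rw [List.getD_eq_getElem l 0 hlt]
  have hpg := List.pairwise_iff_getElem.1 hs
  constructor
  · intro h
    have h1 : l.countP (fun a => a ≤ y) =
        (l.take k).countP (fun a => a ≤ y) + (l.drop k).countP (fun a => a ≤ y) := by
      rw [← List.countP_append, List.take_append_drop]
    have h2 : (l.take k).countP (fun a => a ≤ y) = (l.take k).length := by
      rw [List.countP_eq_length]
      intro a ha
      rw [List.mem_take_iff_getElem] at ha
      obtain ⟨i, hi, rfl⟩ := ha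
      have hi' : i < l.length := lt_of_lt_of_le (lt_min_iff.1 hi).1 hkl
      simp only [decide_eq_true_eq]
      rcases lt_or_eq_of_le (Nat.le_sub_one_of_lt (lt_min_iff.1 hi).1) with h' | h'
      · exact le_trans (hpg i (k-1) hi' hlt h') h
      · subst h'; simpa using h
    have h3 : (l.take k).length = k := by simp [List.length_take]; omega
    omega
  · intro h
    by_contra hcon
    push_neg at hcon
    have h1 : l.countP (fun a => a ≤ y) =
        (l.take (k-1)).countP (fun a => a ≤ y) + (l.drop (k-1)).countP (fun a => a ≤ y) := by
      rw [← List.countP_append, List.take_append_drop]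
    have h2 : (l.drop (k-1)).countP (fun a => a ≤ y) = 0 := by
      rw [List.countP_eq_zero]
      intro a ha
      rw [List.mem_iff_getElem] at ha
      obtain ⟨j, hj, rfl⟩ := ha
      simp only [List.getElem_drop, decide_eq_true_eq, not_le]
      have hj' : k - 1 + j < l.length := by
        have := hj; rw [List.length_drop] at this; omega
      rcases Nat.eq_zero_or_pos j with h' | h'
      · subst h'; simpa using hcon
      · exact lt_of_lt_of_le hcon (hpg (k-1) (k-1+j) hlt hj' (by omega))
    have h3 : (l.take (k-1)).countP (fun a => a ≤ y) ≤ k - 1 := by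
      calc (l.take (k-1)).countP (fun a => a ≤ y) ≤ (l.take (k-1)).length :=
            List.countP_le_length
      _ ≤ k - 1 := by simp [List.length_take]
    omega

theorem countP_ofFn {M : ℕ} (r : Fin M → ℝ) (p : ℝ → Bool) :
    (List.ofFn r).countP p = (Finset.univ.filter (fun i => p (r i))).card := by
  classical
  rw [List.ofFn_eq_map, List.countP_map, Fin.univ_def]
  simp [Finset.filter, Finset.card, Multiset.countP_eq_card_filter, Function.comp,
    List.countP_eq_length_filter]
  rfl

theorem lt_kthSmallest_iff {M : ℕ} (r : Fin M → ℝ) {k : ℕ} (hk1 : 1 ≤ k) (hkM : k ≤ M)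
    (y : ℝ) :
    y < kthSmallest r k ↔ (Finset.univ.filter (fun j => r j ≤ y)).card < k := by
  classical
  set l := (List.ofFn r).mergeSort (fun a b => a ≤ b) with hl
  have hsort : l.Pairwise (· ≤ ·) := List.pairwise_mergeSort' _ _
  have hlen : k ≤ l.length := by
    rw [hl, List.length_mergeSort, List.length_ofFn]; exact hkM
  have hcount : l.countP (fun a => a ≤ y) = (Finset.univ.filter (fun j => r j ≤ y)).card := by
    rw [List.Perm.countP_eq _ (List.mergeSort_perm (List.ofFn r) _), countP_ofFn]
    simp
  have := sorted_le_iff_countP hsort hk1 hlen y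
  rw [hcount] at this
  constructor
  · intro h
    by_contra hc
    exact absurd (this.2 (by omega)) (not_le.2 h)
  · intro h
    rcases lt_or_ge y (kthSmallest r k) with h' | h'
    · exact h'
    · exact absurd (this.1 h') (by omega)

theorem count_rank {M : ℕ} (x : Fin (M+1) → ℝ) (hx : Function.Injective x) {k : ℕ}
    (hkM : k ≤ M + 1) :
    (Finset.univ.filter (fun i : Fin (M+1) =>
      (Finset.univ.filter (fun j => j ≠ i ∧ x j ≤ x i)).card < k)).card = k := by
  classical
  open Finset in
  set rank : Fin (M+1) → ℕ := fun i => (univ.filter (fun j => x j ≤ x i)).card with hrank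
  have hmem : ∀ i, i ∈ univ.filter (fun j => x j ≤ x i) := by
    intro i; simp
  have hsplit : ∀ i : Fin (M+1),
      (univ.filter (fun j => j ≠ i ∧ x j ≤ x i)).card = rank i - 1 := by
    intro i
    have : univ.filter (fun j => j ≠ i ∧ x j ≤ x i)
        = (univ.filter (fun j => x j ≤ x i)).erase i := by
      ext j; simp [and_comm]
    rw [this, card_erase_of_mem (hmem i)]
  have hrank_pos : ∀ i, 1 ≤ rank i := fun i => card_pos.2 ⟨i, hmem i⟩
  have hrank_le : ∀ i, rank i ≤ M + 1 := by
    intro i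
    calc rank i ≤ (univ : Finset (Fin (M+1))).card := card_le_card (filter_subset _ _)
    _ = M + 1 := by simp
  have hmono : ∀ i j, x i < x j → rank i < rank j := by
    intro i j hij
    apply card_lt_card
    constructor
    · intro a ha
      simp only [mem_filter, mem_univ, true_and] at ha ⊢
      exact le_trans ha (le_of_lt hij)
    · intro hsub
      have := hsub (hmem j)
      simp only [mem_filter, mem_univ, true_and] at this
      exact absurd this (not_le.2 hij)
  have hinj : Function.Injective rank := by
    intro i j hij
    by_contra hne
    rcases lt_or_gt_of_ne (fun h => hne (hx h)) with h | h
    · exact absurd hij (Nat.ne_of_lt (hmono _ _ h))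
    · exact absurd hij.symm (Nat.ne_of_lt (hmono _ _ h))
  have himage : univ.image rank = Finset.Icc 1 (M+1) := by
    apply Finset.eq_of_subset_of_card_le
    · intro n hn
      simp only [mem_image, mem_univ, true_and] at hn
      obtain ⟨i, rfl⟩ := hn
      exact Finset.mem_Icc.2 ⟨hrank_pos i, hrank_le i⟩
    · rw [Finset.card_image_of_injective _ hinj]
      simp [Nat.card_Icc]
  have key : (univ.filter (fun i : Fin (M+1) => rank i ≤ k)).card = k := by
    have h1 : ((univ.filter (fun i => rank i ≤ k)).image rank).card
        = (univ.filter (fun i => rank i ≤ k)).card :=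
      Finset.card_image_of_injective _ hinj
    have h2 : (univ.filter (fun i => rank i ≤ k)).image rank
        = (univ.image rank).filter (fun n => n ≤ k) := by
      ext n
      simp only [mem_image, mem_filter, mem_univ, true_and]
      constructor
      · rintro ⟨i, ⟨hi, rfl⟩⟩; exact ⟨⟨i, rfl⟩, hi⟩
      · rintro ⟨⟨i, rfl⟩, hi⟩; exact ⟨i, hi, rfl⟩
    have h3 : (Finset.Icc 1 (M+1)).filter (fun n => n ≤ k) = Finset.Icc 1 k := by
      ext n; simp only [mem_filter, Finset.mem_Icc]; omega
    rw [← h1, h2, himage, h3, Nat.card_Icc]; omega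
  rw [← key]
  congr 1
  ext i
  simp only [mem_filter, mem_univ, true_and, hsplit i]
  have := hrank_pos i
  omega

/-- Split conformal prediction coverage guarantee: if `X 0, …, X M` are i.i.d.
with atomless common distribution, `α ∈ (0,1)`, `k = ⌈(M+1)(1-α)⌉ ≤ M`, and `q`
is the `k`-th smallest of the first `M` variables, then
`P(X (last) < q) ≥ 1 - α` (strict version, valid since the distribution is atomless). -/
theorem conformal_coverage_strict
    {Ω : Type*} [MeasurableSpace Ω] (P : Measure Ω) [IsProbabilityMeasure P]
    (M : ℕ) (X : Fin (M + 1) → Ω → ℝ)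
    (hmeas : ∀ i, Measurable (X i))
    (μ : Measure ℝ)
    (hident : ∀ i, Measure.map (X i) P = μ)
    (hatomless : ∀ x : ℝ, μ {x} = 0)
    (hindep : iIndepFun X P)
    (α : ℝ) (hα : α ∈ Set.Ioo (0 : ℝ) 1)
    (k : ℕ) (hk : k = ⌈((M : ℝ) + 1) * (1 - α)⌉₊) (hkM : k ≤ M) :
    ENNReal.ofReal (1 - α) ≤
      P {ω | X (Fin.last M) ω <
        kthSmallest (fun i : Fin M => X i.castSucc ω) k} := by
  classical
  obtain ⟨hα0, hα1⟩ := hα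
  have hμ : IsProbabilityMeasure μ := hident 0 ▸ Measure.isProbabilityMeasure_map (hmeas 0).aemeasurable
  have hk1 : 1 ≤ k := by
    rw [hk]
    exact Nat.ceil_pos.2 (mul_pos (by positivity) (by linarith))
  set Y : Ω → (Fin (M+1) → ℝ) := fun ω i => X i ω with hY
  have hYmeas : Measurable Y := measurable_pi_lambda _ hmeas
  set ν : Measure (Fin (M+1) → ℝ) := Measure.pi (fun _ => μ) with hν
  have hmap : Measure.map Y P = ν := by
    refine (Measure.pi_eq fun s hs => ?_).symm
    rw [Measure.map_apply hYmeas (MeasurableSet.univ_pi hs)]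
    have hpre : Y ⁻¹' (Set.univ.pi s) = ⋂ i ∈ Finset.univ, X i ⁻¹' s i := by
      ext ω; simp [Set.mem_pi, hY]
    rw [hpre, hindep.measure_inter_preimage_eq_mul Finset.univ (fun i _ => hs i)]
    exact Finset.prod_congr rfl fun i _ => by
      rw [← hident i, Measure.map_apply (hmeas i) (hs i)]
  set A : Fin (M+1) → Set (Fin (M+1) → ℝ) := fun i =>
    {x | (Finset.univ.filter (fun j => j ≠ i ∧ x j ≤ x i)).card < k} with hA
  have hAmeas : ∀ i, MeasurableSet (A i) := by
    intro i
    have hc : Measurable (fun x : Fin (M+1) → ℝ =>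
        (Finset.univ.filter (fun j => j ≠ i ∧ x j ≤ x i)).card) := by
      have heq : (fun x : Fin (M+1) → ℝ =>
          (Finset.univ.filter (fun j => j ≠ i ∧ x j ≤ x i)).card)
          = fun x => ∑ j : Fin (M+1), if j ≠ i ∧ x j ≤ x i then 1 else 0 := by
        funext x; rw [Finset.card_filter]
      rw [heq]
      refine Finset.measurable_sum _ fun j _ => ?_
      by_cases hji : j = i
      · simp [hji]
      · simp only [hji, ne_eq, not_false_iff, true_and]
        exact Measurable.ite
          (measurableSet_le (measurable_pi_apply j) (measurable_pi_apply i))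
          measurable_const measurable_const
    exact hc ((Set.Iio k).to_countable.measurableSet)
  have hswap : ∀ i : Fin (M+1), ν (A i) = ν (A (Fin.last M)) := by
    intro i
    set σ := Equiv.swap i (Fin.last M) with hσ
    have hT : ⇑(MeasurableEquiv.piCongrLeft (fun _ : Fin (M+1) => ℝ) σ)
        = fun x : Fin (M+1) → ℝ => x ∘ σ := by
      funext x a
      simp [MeasurableEquiv.piCongrLeft, hσ, Equiv.symm_swap, Equiv.piCongrLeft_apply_eq_cast]
    have hmp : MeasurePreserving
        (fun x : Fin (M+1) → ℝ => x ∘ σ) ν ν := by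
      have := measurePreserving_piCongrLeft (fun _ : Fin (M+1) => μ) σ
      rwa [hT] at this
    have hpre : (fun x : Fin (M+1) → ℝ => x ∘ σ) ⁻¹' (A (Fin.last M)) = A i := by
      ext x
      simp only [Set.mem_preimage, hA, Set.mem_setOf_eq, Function.comp]
      have hcard : (Finset.univ.filter
            (fun j => j ≠ Fin.last M ∧ x (σ j) ≤ x (σ (Fin.last M)))).card
          = (Finset.univ.filter (fun j => j ≠ i ∧ x j ≤ x i)).card := by
        refine Finset.card_equiv σ fun j => ?_
        have h1 : σ (Fin.last M) = i := Equiv.swap_apply_right _ _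
        have h2 : (σ j = i) ↔ (j = Fin.last M) := by
          constructor
          · intro h; exact σ.injective (h.trans h1.symm)
          · intro h; rw [h, h1]
        simp only [Finset.mem_filter, Finset.mem_univ, true_and, h1]
        constructor
        · rintro ⟨ha, hb⟩; exact ⟨fun hc => ha (h2.1 hc), hb⟩
        · rintro ⟨ha, hb⟩; exact ⟨fun hc => ha (h2.2 hc), hb⟩
      rw [hcard]
    rw [← hpre, hmp.measure_preimage (hAmeas (Fin.last M)).nullMeasurableSet]
  have hpair : ∀ i j : Fin (M+1), i ≠ j → ν {x : Fin (M+1) → ℝ | x i = x j} = 0 := by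
    intro i j hij
    have hdiag : MeasurableSet {p : ℝ × ℝ | p.1 = p.2} :=
      measurableSet_eq_fun measurable_fst measurable_snd
    have hI : IndepFun (X i) (X j) P := hindep.indepFun hij
    have hmapp : Measure.map (fun ω => (X i ω, X j ω)) P = μ.prod μ := by
      rw [(indepFun_iff_map_prod_eq_prod_map_map (hmeas i).aemeasurable
        (hmeas j).aemeasurable).1 hI, hident i, hident j]
    have hset : MeasurableSet {x : Fin (M+1) → ℝ | x i = x j} :=
      measurableSet_eq_fun (measurable_pi_apply i) (measurable_pi_apply j)
    have h1 : ν {x : Fin (M+1) → ℝ | x i = x j} = P {ω | X i ω = X j ω} := by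
      rw [← hmap, Measure.map_apply hYmeas hset]; rfl
    rw [h1]
    have h2 : {ω | X i ω = X j ω}
        = (fun ω => (X i ω, X j ω)) ⁻¹' {p : ℝ × ℝ | p.1 = p.2} := rfl
    rw [h2, ← Measure.map_apply ((hmeas i).prodMk (hmeas j)) hdiag, hmapp,
      Measure.prod_apply hdiag]
    have h3 : ∀ a : ℝ, (Prod.mk a ⁻¹' {p : ℝ × ℝ | p.1 = p.2}) = {a} := by
      intro a; ext b; simp [eq_comm]
    simp only [h3, hatomless]
    simp
  have hinj_ae : ∀ᵐ x ∂ν, Function.Injective x := by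
    rw [ae_iff]
    refine measure_mono_null (fun x hx => ?_)
      (measure_iUnion_null fun i : Fin (M+1) => measure_iUnion_null fun j =>
        measure_iUnion_null fun hij : i ≠ j => hpair i j hij)
    simp only [Set.mem_setOf_eq, Function.Injective, not_forall] at hx
    obtain ⟨i, j, hxe, hne⟩ := hx
    exact Set.mem_iUnion.2 ⟨i, Set.mem_iUnion.2 ⟨j, Set.mem_iUnion.2 ⟨hne, hxe⟩⟩⟩
  have hsum : ∑ i : Fin (M+1), ν (A i) = k := by
    have h1 : ∑ i : Fin (M+1), ν (A i)
        = ∫⁻ x, (∑ i : Fin (M+1), (A i).indicator (1 : (Fin (M+1) → ℝ) → ℝ≥0∞) x) ∂ν := by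
      rw [lintegral_finset_sum _ fun i _ => measurable_one.indicator (hAmeas i)]
      exact Finset.sum_congr rfl fun i _ => (lintegral_indicator_one (hAmeas i)).symm
    have h2 : ∀ᵐ x ∂ν,
        (∑ i : Fin (M+1), (A i).indicator (1 : (Fin (M+1) → ℝ) → ℝ≥0∞) x) = k := by
      filter_upwards [hinj_ae] with x hxinj
      have hcr := count_rank x hxinj (k := k) (by omega)
      calc ∑ i : Fin (M+1), (A i).indicator (1 : (Fin (M+1) → ℝ) → ℝ≥0∞) x
          = ∑ i : Fin (M+1), if x ∈ A i then (1 : ℝ≥0∞) else 0 := by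
            exact Finset.sum_congr rfl fun i _ => by
              simp [Set.indicator_apply]
        _ = ((Finset.univ.filter (fun i : Fin (M+1) => x ∈ A i)).card : ℝ≥0∞) := by
            rw [Finset.card_filter]
            push_cast
            exact Finset.sum_congr rfl fun i _ => by split <;> simp
        _ = k := by
            have heq : (Finset.univ.filter (fun i : Fin (M+1) => x ∈ A i))
                = (Finset.univ.filter (fun i : Fin (M+1) =>
                    (Finset.univ.filter (fun j => j ≠ i ∧ x j ≤ x i)).card < k)) := by
              refine Finset.filter_congr fun i _ => ?_
              simp [hA]
            rw [heq, hcr]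
    rw [h1, lintegral_congr_ae h2, lintegral_const, measure_univ, mul_one]
  have hsum2 : ∑ i : Fin (M+1), ν (A i) = (M+1 : ℝ≥0∞) * ν (A (Fin.last M)) := by
    rw [Finset.sum_congr rfl fun i _ => hswap i, Finset.sum_const, Finset.card_univ,
      Fintype.card_fin, nsmul_eq_mul]
    push_cast
    ring
  have hval : (M+1 : ℝ≥0∞) * ν (A (Fin.last M)) = k := by rw [← hsum2, hsum]
  have hevent : {ω | X (Fin.last M) ω < kthSmallest (fun i : Fin M => X i.castSucc ω) k}
      = Y ⁻¹' (A (Fin.last M)) := by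
    ext ω
    simp only [Set.mem_setOf_eq, Set.mem_preimage, hA, hY]
    rw [lt_kthSmallest_iff _ hk1 hkM]
    have hcard : (Finset.univ.filter
          (fun j : Fin M => X j.castSucc ω ≤ X (Fin.last M) ω)).card
        = (Finset.univ.filter
          (fun j : Fin (M+1) => j ≠ Fin.last M ∧ X j ω ≤ X (Fin.last M) ω)).card := by
      refine Finset.card_bij (fun j _ => j.castSucc) ?_ ?_ ?_
      · intro j hj
        simp only [Finset.mem_filter, Finset.mem_univ, true_and] at hj ⊢
        exact ⟨(Fin.castSucc_lt_last j).ne, hj⟩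
      · intro a _ b _ hab
        exact Fin.castSucc_injective _ hab
      · intro j hj
        simp only [Finset.mem_filter, Finset.mem_univ, true_and] at hj
        obtain ⟨h1, h2⟩ := hj
        refine ⟨j.castPred h1, by simp [h2], by simp⟩
    rw [hcard]
  rw [hevent, ← Measure.map_apply hYmeas (hAmeas (Fin.last M)), hmap]
  have hcast : (M+1 : ℝ≥0∞) = ((M+1 : ℕ) : ℝ≥0∞) := by push_cast; ring
  have hne0 : (M+1 : ℝ≥0∞) ≠ 0 := by
    rw [hcast]; exact Nat.cast_ne_zero.2 M.succ_ne_zero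
  have hnetop : (M+1 : ℝ≥0∞) ≠ ⊤ := by
    rw [hcast]; exact ENNReal.natCast_ne_top _
  refine (ENNReal.mul_le_mul_iff_right hne0 hnetop).1 ?_
  rw [hval]
  have hle : ((M : ℝ) + 1) * (1 - α) ≤ (k : ℝ) := by
    rw [hk]; exact Nat.le_ceil _
  calc (M+1 : ℝ≥0∞) * ENNReal.ofReal (1 - α)
      = ENNReal.ofReal (((M : ℝ) + 1) * (1 - α)) := by
        rw [ENNReal.ofReal_mul (by positivity)]
        congr 1
        rw [ENNReal.ofReal_add (by positivity) (by norm_num)]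
        simp [ENNReal.ofReal_natCast]
    _ ≤ ENNReal.ofReal (k : ℝ) := ENNReal.ofReal_le_ofReal hle
    _ = (k : ℝ≥0∞) := ENNReal.ofReal_natCast k
end
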